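/- In the steady state of the AIMD fluid model with N sessions, if W_1 ≥ W_2 ≥ ⋯ ≥ W_N, W_1/2 = K·N, and consecutive gaps satisfy W_n − W_{n+1} = K for all n < N, then after the largest window is halved and all windows grow by K, the resulting multiset of window sizes equals the original multiset shifted: W_{n+1}^{new} = W_n^{old} for n < N and W_1^{new} = W_1/2 + K = W_N. Hence the window configuration is periodic with period K time slots. -/
import Mathlib


/-- At a halving event the largest window `W 0` is replaced by `W 0 / 2`,
then all windows grow by `K` until the next event. -/
theorem stmt5 (N : ℕ) (hN : 2 ≤ N) (W : Fin N → ℝ) (K : ℝ) (hK : 0 < K)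
    (hsorted : ∀ i j : Fin N, i ≤ j → W j ≤ W i)
    (hhalf : W ⟨0, by omega⟩ / 2 = K * N)
    (hgap : ∀ n : Fin N, ∀ h : n.val + 1 < N, W n - W ⟨n.val + 1, h⟩ = K)
    (Wnew : Fin N → ℝ)
    (hdef0 : Wnew ⟨0, by omega⟩ = W ⟨0, by omega⟩ / 2 + K)
    (hdefs : ∀ n : Fin N, ∀ h : n.val + 1 < N, Wnew ⟨n.val + 1, h⟩ = W ⟨n.val + 1, h⟩ + K) :
    (∀ n : Fin N, ∀ h : n.val + 1 < N, Wnew ⟨n.val + 1, h⟩ = W n) ∧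
    Wnew ⟨0, by omega⟩ = W ⟨N - 1, by omega⟩ ∧
    Multiset.map Wnew Finset.univ.val = Multiset.map W Finset.univ.val := by
  obtain ⟨m, rfl⟩ : ∃ m, N = m + 2 := ⟨N - 2, by omega⟩
  -- part 1
  have h1 : ∀ n : Fin (m + 2), ∀ h : n.val + 1 < m + 2,
      Wnew ⟨n.val + 1, h⟩ = W n := by
    intro n h
    have := hgap n h
    rw [hdefs n h]; linarith
  -- linear formula
  have hlin : ∀ n : ℕ, ∀ h : n < m + 2, W ⟨n, h⟩ = W ⟨0, by omega⟩ - n * K := by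
    intro n
    induction n with
    | zero => intro h; simp
    | succ k ih =>
      intro h
      have hk : k < m + 2 := by omega
      have := hgap ⟨k, hk⟩ h
      have := ih hk
      push_cast
      linarith
  have h2 : Wnew ⟨0, by omega⟩ = W ⟨m + 2 - 1, by omega⟩ := by
    have e : (⟨m + 2 - 1, by omega⟩ : Fin (m + 2)) = ⟨m + 1, by omega⟩ := rfl
    push_cast at hhalf
    rw [e, hdef0, hhalf, hlin (m + 1) (by omega)]
    have hW0 : W ⟨0, by omega⟩ = 2 * (K * ((m : ℝ) + 2)) := by linarith [hhalf]
    rw [hW0]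
    push_cast
    ring
  refine ⟨h1, h2, ?_⟩
  -- the permutation i ↦ i - 1
  set σ : Equiv.Perm (Fin (m + 2)) := Equiv.subRight 1 with hσ
  have hfun : ∀ i : Fin (m + 2), Wnew i = W (σ i) := by
    intro ⟨n, hn⟩
    cases n with
    | zero =>
      have hs : σ ⟨0, hn⟩ = ⟨m + 1, by omega⟩ := by
        simp only [hσ, Equiv.subRight_apply]
        apply Fin.ext
        simp [Fin.sub_def]
      rw [hs]
      have e : (⟨m + 2 - 1, by omega⟩ : Fin (m + 2)) = ⟨m + 1, by omega⟩ := rfl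
      rw [← e, ← h2]
    | succ k =>
      have hs : σ ⟨k + 1, hn⟩ = ⟨k, by omega⟩ := by
        simp only [hσ, Equiv.subRight_apply]
        apply Fin.ext
        simp [Fin.sub_def]
        rw [show m + 1 + (k + 1) = k + (m + 2) by omega, Nat.add_mod_right]
        simp [Nat.mod_eq_of_lt (show k < m + 2 by omega)]
      rw [hs, h1 ⟨k, by omega⟩ hn]
  calc Multiset.map Wnew Finset.univ.val
      = Multiset.map (W ∘ σ) Finset.univ.val := by
        apply Multiset.map_congr rfl
        intro x _
        exact hfun x
    _ = Multiset.map W (Multiset.map σ Finset.univ.val) := by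
        rw [Multiset.map_map]
    _ = Multiset.map W Finset.univ.val := by
        congr 1
        have : Multiset.map σ Finset.univ.val
            = (Finset.univ.map σ.toEmbedding).val := rfl
        rw [this, Finset.map_univ_equiv]
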